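/- Let n ≥ 1 and let x₁(t),...,x_n(t) be continuous real functions on an unbounded interval (T, ∞) such that for every t the elementary symmetric combinations satisfy (-1)^k e_k(x₁(t),...,x_n(t)) = a_k t + b_k for k = 1,...,n, with a₁ ≠ 0. Then as t → ∞, at most one of the functions x_i(t) is unbounded; more precisely, there exist constants C and an index set of size at least n-1 on which all corresponding x_i(t) are bounded for large t. -/

import Mathlib

open Polynomial Filter

private lemma esymm_cons_two (a : ℝ) (s : Multiset ℝ) (k : ℕ) :
    (a ::ₘ s).esymm (k+1) = s.esymm (k+1) + a * s.esymm k := by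
  simp only [Multiset.esymm, Multiset.powersetCard_cons, Multiset.map_add, Multiset.sum_add,
    Multiset.map_map, Function.comp, Multiset.prod_cons]
  rw [Multiset.sum_map_mul_left]

private lemma esymm_one' (s : Multiset ℝ) : s.esymm 1 = s.sum := by
  simp [Multiset.esymm, Multiset.powersetCard_one, Multiset.map_map, Function.comp]

private lemma sum_sq_esymm (s : Multiset ℝ) :
    s.sum^2 = ((s.map fun r => r^2).sum) + 2 * s.esymm 2 := by
  induction s using Multiset.induction_on with
  | empty => simp [Multiset.esymm, Multiset.powersetCard_eq_empty 2 (by simp : Multiset.card (0 : Multiset ℝ) < 2)]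
  | cons a s ih =>
    have h2 := esymm_cons_two a s 1
    norm_num at h2
    rw [Multiset.sum_cons, Multiset.map_cons, Multiset.sum_cons, h2, esymm_one']
    nlinarith [ih]

private lemma coeff_e1 (m : ℕ) (r : Fin (m+2) → ℝ) :
    (∏ i, (X - C (r i))).coeff (m+1) = -∑ i, r i := by
  have h := Polynomial.prod_X_sub_C_coeff_card_pred Finset.univ r
    (by simp : 0 < (Finset.univ : Finset (Fin (m+2))).card)
  simpa using h

private lemma coeff_e2 (m : ℕ) (r : Fin (m+2) → ℝ) :
    (∏ i, (X - C (r i))).coeff m = ((∑ i, r i)^2 - ∑ i, (r i)^2) / 2 := by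
  have h1 : (∏ i, (X - C (r i))) = ((Finset.univ.val.map r).map fun t => X - C t).prod := by
    rw [Finset.prod_eq_multiset_prod, Multiset.map_map]; rfl
  have hcard : Multiset.card (Finset.univ.val.map r) = m + 2 := by simp
  have h2 := Multiset.prod_X_sub_C_coeff (Finset.univ.val.map r) (k := m)
    (by rw [hcard]; omega)
  rw [h1, h2, hcard, show m + 2 - m = 2 by omega]
  have h4 := sum_sq_esymm (Finset.univ.val.map r)
  have h5 : (Finset.univ.val.map r).sum = ∑ i, r i := (Finset.sum_eq_multiset_sum _ _).symm
  have h6 : ((Finset.univ.val.map r).map (fun t => t^2)).sum = ∑ i, (r i)^2 := by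
    rw [Multiset.map_map]
    exact (Finset.sum_eq_multiset_sum _ _).symm
  rw [h5, h6] at h4
  rw [show ((-1:ℝ))^2 = 1 by norm_num]
  linarith

private lemma eval_root_sum (m : ℕ) (r : Fin (m+2) → ℝ) (j : Fin (m+2)) :
    ∑ k ∈ Finset.range (m+3), (∏ i, (X - C (r i))).coeff k * (r j)^k = 0 := by
  have hdeg : (∏ i, (X - C (r i))).natDegree = m + 2 := by
    rw [natDegree_prod_of_monic _ _ fun i _ => monic_X_sub_C _]
    simp
  have h0 : Polynomial.eval (r j) (∏ i, (X - C (r i))) = 0 := by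
    rw [Polynomial.eval_prod]
    exact Finset.prod_eq_zero (Finset.mem_univ j) (by simp)
  rw [Polynomial.eval_eq_sum_range, hdeg] at h0
  exact h0.symm ▸ rfl

private lemma coeff_top' (m : ℕ) (r : Fin (m+2) → ℝ) :
    (∏ i, (X - C (r i))).coeff (m+2) = 1 := by
  have hmono : (∏ i, (X - C (r i))).Monic :=
    monic_prod_of_monic _ _ fun i _ => monic_X_sub_C _
  have hdeg : (∏ i, (X - C (r i))).natDegree = m + 2 := by
    rw [natDegree_prod_of_monic _ _ fun i _ => monic_X_sub_C _]
    simp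
  have := hmono.coeff_natDegree
  rwa [hdeg] at this

set_option maxHeartbeats 1600000 in
theorem at_most_one_unbounded_node (n : ℕ) (hn : 1 ≤ n) (T : ℝ)
    (x : Fin n → ℝ → ℝ) (a b : ℕ → ℝ)
    (hcont : ∀ i, ContinuousOn (x i) (Set.Ioi T))
    (hcoef : ∀ t ∈ Set.Ioi T, ∀ k, 1 ≤ k → k ≤ n →
      (∏ i, (X - C (x i t))).coeff (n - k) = a k * t + b k)
    (ha : a 1 ≠ 0) :
    ∃ C : ℝ, ∃ S : Finset (Fin n), n - 1 ≤ S.card ∧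
      ∃ T' : ℝ, ∀ t, T' < t → t ∈ Set.Ioi T → ∀ i ∈ S, |x i t| ≤ C := by
  obtain hn1 | hn2 : n = 1 ∨ 2 ≤ n := by omega
  · exact ⟨0, ∅, by simp [hn1], T, fun t _ _ i hi => absurd hi (by simp)⟩
  obtain ⟨m, rfl⟩ : ∃ m, n = m + 2 := ⟨n - 2, by omega⟩
  set A := |a 1| with hAdef
  have hA : 0 < A := abs_pos.mpr ha
  set B1 := |b 1| with hB1def
  have hB1 : 0 ≤ B1 := abs_nonneg _
  set Sa := ∑ j ∈ Finset.range (m+1), |a (m+2-j)| with hSadef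
  set Sb := ∑ j ∈ Finset.range (m+1), |b (m+2-j)| with hSbdef
  have hSa0 : 0 ≤ Sa := Finset.sum_nonneg fun _ _ => abs_nonneg _
  have hSb0 : 0 ≤ Sb := Finset.sum_nonneg fun _ _ => abs_nonneg _
  have hA2 : |a 2| ≤ Sa := by
    have h : |a (m+2-m)| ≤ ∑ j ∈ Finset.range (m+1), |a (m+2-j)| :=
      Finset.single_le_sum (f := fun j => |a (m+2-j)|)
        (fun _ _ => abs_nonneg _) (Finset.self_mem_range_succ m)
    rwa [show m+2-m = 2 by omega] at h
  have hB2 : |b 2| ≤ Sb := by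
    have h : |b (m+2-m)| ≤ ∑ j ∈ Finset.range (m+1), |b (m+2-j)| :=
      Finset.single_le_sum (f := fun j => |b (m+2-j)|)
        (fun _ _ => abs_nonneg _) (Finset.self_mem_range_succ m)
    rwa [show m+2-m = 2 by omega] at h
  obtain ⟨R, hR1, hRA⟩ : ∃ R : ℝ, 1 ≤ R ∧ R * A = 8*(Sa+1) + A :=
    ⟨8*(Sa+1)/A + 1, le_add_of_nonneg_left (by positivity), by field_simp⟩
  have hR0 : 0 ≤ R := by linarith
  obtain ⟨T0, hfacts⟩ : ∃ T0 : ℝ, ∀ t, T0 ≤ t → 1 ≤ t ∧ T < t ∧ Sb + 1 ≤ t ∧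
      8*B1 ≤ A*t ∧ 16*A*B1 + 8*B1^2 + 16*Sa + 16*Sb + 8 ≤ A^2*t ∧ 2*(R+1) ≤ A*t := by
    refine ⟨max T 0 + 1 + (Sb + 1) + 8*B1/A +
      (16*A*B1 + 8*B1^2 + 16*Sa + 16*Sb + 8)/A^2 + 2*(R+1)/A, ?_⟩
    intro t ht
    have hm1 : T ≤ max T 0 := le_max_left _ _
    have hm2 : (0:ℝ) ≤ max T 0 := le_max_right _ _
    have hAB1 : (0:ℝ) ≤ A*B1 := mul_nonneg hA.le hB1
    have hd1 : (0:ℝ) ≤ 8*B1/A := div_nonneg (by linarith) hA.le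
    have hd2 : (0:ℝ) ≤ (16*A*B1 + 8*B1^2 + 16*Sa + 16*Sb + 8)/A^2 :=
      div_nonneg (by nlinarith [sq_nonneg B1]) (by positivity)
    have hd3 : (0:ℝ) ≤ 2*(R+1)/A := div_nonneg (by linarith) hA.le
    refine ⟨by linarith, by linarith, by linarith, ?_, ?_, ?_⟩
    · have h : 8*B1/A ≤ t := by linarith
      have := (div_le_iff₀ hA).mp h
      linarith
    · have h : (16*A*B1 + 8*B1^2 + 16*Sa + 16*Sb + 8)/A^2 ≤ t := by linarith
      have := (div_le_iff₀ (by positivity : (0:ℝ) < A^2)).mp h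
      linarith
    · have h : 2*(R+1)/A ≤ t := by linarith
      have := (div_le_iff₀ hA).mp h
      linarith
  have habs : ∀ t : ℝ, 0 ≤ t → ∀ p q : ℝ, |p*t + q| ≤ |p| * t + |q| := by
    intro t ht p q
    calc |p*t + q| ≤ |p*t| + |q| := abs_add_le _ _
      _ = |p| * t + |q| := by rw [abs_mul, abs_of_nonneg ht]
  -- the sum identity
  have hsum : ∀ t, T0 ≤ t → ∑ i, x i t = -(a 1 * t + b 1) := by
    intro t ht
    have h := hcoef t (hfacts t ht).2.1 1 (by omega) (by omega)
    rw [show m+2-1 = m+1 by omega, coeff_e1 m (fun i => x i t)] at h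
    linarith
  -- the sum of squares identity
  have hsq : ∀ t, T0 ≤ t → ∑ i, (x i t)^2 = (a 1 * t + b 1)^2 - 2*(a 2 * t + b 2) := by
    intro t ht
    have h := hcoef t (hfacts t ht).2.1 2 (by omega) (by omega)
    rw [show m+2-2 = m by omega, coeff_e2 m (fun i => x i t)] at h
    have h2 := hsum t ht
    rw [h2] at h
    nlinarith [h]
  -- the annulus inequality
  have hann : ∀ t, T0 ≤ t → ∀ i, 1 ≤ |x i t| →
      |x i t| * |x i t + (a 1 * t + b 1)| ≤ Sa * t + Sb := by
    intro t ht i h1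
    obtain ⟨ht1, htT, -, -, -, -⟩ := hfacts t ht
    have ht0 : (0:ℝ) ≤ t := by linarith
    have hev := eval_root_sum m (fun i => x i t) i
    rw [Finset.sum_range_succ, Finset.sum_range_succ, coeff_top' m (fun i => x i t)] at hev
    have hc1 := hcoef t htT 1 (by omega) (by omega)
    rw [show m+2-1 = m+1 by omega] at hc1
    rw [hc1] at hev
    have hcoe : ∀ k ∈ Finset.range (m+1),
        (∏ i, (X - C (x i t))).coeff k * (x i t)^k
          = (a (m+2-k) * t + b (m+2-k)) * (x i t)^k := by
      intro k hk
      rw [Finset.mem_range] at hk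
      have hco := hcoef t htT (m+2-k) (by omega) (by omega)
      rw [show m+2-(m+2-k) = k by omega] at hco
      rw [hco]
    rw [Finset.sum_congr rfl hcoe] at hev
    have heq : (x i t)^(m+1) * (x i t + (a 1 * t + b 1)) =
        -∑ k ∈ Finset.range (m+1), (a (m+2-k) * t + b (m+2-k)) * (x i t)^k := by
      linear_combination hev
    have habs1 : |x i t|^(m+1) * |x i t + (a 1 * t + b 1)| ≤ (Sa * t + Sb) * |x i t|^m := by
      rw [← abs_pow, ← abs_mul, heq, abs_neg]
      calc |∑ k ∈ Finset.range (m+1), (a (m+2-k) * t + b (m+2-k)) * (x i t)^k|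
          ≤ ∑ k ∈ Finset.range (m+1), |(a (m+2-k) * t + b (m+2-k)) * (x i t)^k| :=
            Finset.abs_sum_le_sum_abs _ _
        _ ≤ ∑ k ∈ Finset.range (m+1), (|a (m+2-k)| * t + |b (m+2-k)|) * |x i t|^m := by
            apply Finset.sum_le_sum
            intro k hk
            rw [Finset.mem_range] at hk
            rw [abs_mul, abs_pow]
            apply mul_le_mul (habs t ht0 _ _) (pow_le_pow_right₀ h1 (by omega))
              (by positivity) (by positivity)
        _ = (Sa * t + Sb) * |x i t|^m := by
            rw [← Finset.sum_mul, hSadef, hSbdef, Finset.sum_add_distrib, Finset.sum_mul]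
    have hzpos : (0:ℝ) < |x i t| := by linarith
    have hzm : (0:ℝ) < |x i t|^m := pow_pos hzpos m
    rw [pow_succ] at habs1
    rw [show |x i t|^m * |x i t| * |x i t + (a 1 * t + b 1)|
        = |x i t|^m * (|x i t| * |x i t + (a 1 * t + b 1)|) from by ring,
      show (Sa * t + Sb) * |x i t|^m = |x i t|^m * (Sa * t + Sb) from by ring] at habs1
    exact le_of_mul_le_mul_left habs1 hzm
  -- KEY1 : no roots in the annulus
  have key1 : ∀ t, T0 ≤ t → ∀ i, |x i t| < R ∨ 3/4*(A*t) < |x i t| := by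
    intro t ht i
    by_contra hcon
    push_neg at hcon
    obtain ⟨hz1, hz2⟩ := hcon
    obtain ⟨ht1, htT, htSb, htB, -, -⟩ := hfacts t ht
    have ht0 : (0:ℝ) < t := by linarith
    have h1 : 1 ≤ |x i t| := le_trans hR1 hz1
    have hanni := hann t ht i h1
    have hc : A*t - B1 ≤ |a 1 * t + b 1| := by
      have h := abs_sub_abs_le_abs_sub (a 1 * t) (-(b 1))
      rw [abs_neg, sub_neg_eq_add] at h
      rw [abs_mul, abs_of_pos ht0] at h
      rw [hAdef, hB1def]
      exact h
    have hzc : (A*t - B1) - |x i t| ≤ |x i t + (a 1 * t + b 1)| := by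
      have h := abs_sub_abs_le_abs_sub (a 1 * t + b 1) (-(x i t))
      rw [abs_neg, sub_neg_eq_add] at h
      rw [show a 1 * t + b 1 + x i t = x i t + (a 1 * t + b 1) from by ring] at h
      linarith
    have hlow : R * (A*t/8) ≤ |x i t| * |x i t + (a 1 * t + b 1)| := by
      apply mul_le_mul hz1 (by linarith) (by linarith) (by linarith [abs_nonneg (x i t)])
    have hRAt : R * (A*t/8) = (Sa+1)*t + A*t/8 := by
      rw [show R * (A*t/8) = (R*A)*t/8 from by ring, hRA]; ring
    have hAt : (0:ℝ) < A*t := mul_pos hA ht0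
    linarith
  -- KEY2 : at most one big root
  have key2 : ∀ t, T0 ≤ t → ∀ i j, i ≠ j →
      3/4*(A*t) < |x i t| → 3/4*(A*t) < |x j t| → False := by
    intro t ht i j hij hbi hbj
    obtain ⟨ht1, htT, htSb, htB, htc3, -⟩ := hfacts t ht
    have ht0 : (0:ℝ) ≤ t := by linarith
    have hAt : (0:ℝ) ≤ A*t := mul_nonneg hA.le ht0
    have hsqt := hsq t ht
    have hpair : (x i t)^2 + (x j t)^2 ≤ ∑ k, (x k t)^2 := by
      have hsub := Finset.sum_le_sum_of_subset_of_nonneg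
        (Finset.subset_univ ({i,j} : Finset (Fin (m+2)))) (fun k _ _ => sq_nonneg (x k t))
      rwa [Finset.sum_pair hij] at hsub
    have hi2 : (3/4*(A*t))^2 ≤ (x i t)^2 := by
      rw [← sq_abs (x i t)]
      exact pow_le_pow_left₀ (by linarith) (le_of_lt hbi) 2
    have hj2 : (3/4*(A*t))^2 ≤ (x j t)^2 := by
      rw [← sq_abs (x j t)]
      exact pow_le_pow_left₀ (by linarith) (le_of_lt hbj) 2
    have hc1 : |a 1 * t + b 1| ≤ A*t + B1 := by
      have h := habs t ht0 (a 1) (b 1)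
      rw [hAdef, hB1def]
      exact h
    have hc2 : |a 2 * t + b 2| ≤ Sa*t + Sb := by
      have h := habs t ht0 (a 2) (b 2)
      have h2 : |a 2| * t ≤ Sa * t := mul_le_mul_of_nonneg_right hA2 ht0
      linarith
    have h1 := abs_le.mp hc1
    have h2 := abs_le.mp hc2
    have hcsq : (a 1 * t + b 1)^2 ≤ (A*t + B1)^2 := sq_le_sq' h1.1 h1.2
    linarith [hsqt, hpair, hi2, hj2, hcsq, h2.1,
      mul_le_mul_of_nonneg_right htc3 ht0,
      mul_nonneg (sub_nonneg.mpr ht1) (sq_nonneg B1),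
      mul_nonneg (sub_nonneg.mpr ht1) hSb0]
  -- KEY3
  have key3 : ∀ t, T0 ≤ t → R + 1 ≤ 3/4*(A*t) := by
    intro t ht
    have h := (hfacts t ht).2.2.2.2.2
    linarith
  -- Endgame
  by_cases hcase : ∀ t, T0 ≤ t → ∀ i, |x i t| < R
  · exact ⟨R, Finset.univ, by simp, T0, fun t ht _ i _ => (hcase t ht.le i).le⟩
  push_neg at hcase
  obtain ⟨t0, ht0, i0, hbig0'⟩ := hcase
  have hbig0 : 3/4*(A*t0) < |x i0 t0| := by
    rcases key1 t0 ht0 i0 with h | h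
    · exact absurd h (not_lt.mpr hbig0')
    · exact h
  refine ⟨R, Finset.univ.erase i0, ?_, t0, ?_⟩
  · rw [Finset.card_erase_of_mem (Finset.mem_univ i0)]
    simp
  intro t ht _ j hj
  have hjne : j ≠ i0 := Finset.ne_of_mem_erase hj
  by_contra hcon
  push_neg at hcon
  have h1t : T0 ≤ t := le_trans ht0 ht.le
  have hbigt : 3/4*(A*t) < |x j t| := by
    rcases key1 t h1t j with h | h
    · linarith
    · exact h
  have hsmall0 : |x j t0| < R := by
    rcases key1 t0 ht0 j with h | h
    · exact h
    · exact absurd h (by intro h'; exact key2 t0 ht0 j i0 hjne h' hbig0)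
  -- IVT
  have hTt0 : T < t0 := (hfacts t0 ht0).2.1
  have hsub : Set.Icc t0 t ⊆ Set.Ioi T := fun s hs => lt_of_lt_of_le hTt0 hs.1
  have hcont' : ContinuousOn (fun s => |x j s|) (Set.Icc t0 t) := ((hcont j).mono hsub).abs
  have hmem : (R+1) ∈ Set.Icc (|x j t0|) (|x j t|) := by
    constructor
    · linarith
    · linarith [key3 t h1t]
  obtain ⟨s, hs, hval⟩ := intermediate_value_Icc ht.le hcont' hmem
  have hval' : |x j s| = R + 1 := hval
  have hsT0 : T0 ≤ s := le_trans ht0 hs.1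
  rcases key1 s hsT0 j with h | h
  · rw [hval'] at h; linarith
  · rw [hval'] at h
    linarith [key3 s hsT0]
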